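/- arXiv:2106.14175 — 4 statements merged into one kernel-verified Lean document; each statement's English description precedes it below -/
import Mathlib

section
/- Let A and B be finitely generated (abstract) abelian groups, let t(A) be the order of the torsion subgroup of A, and let n = t(A)·m where m > 1 is an integer. If A/nA ≅ B/nB, then t(B) ≥ t(A), where t(B) is the order of the torsion subgroup of B. -/
/-- The set of torsion elements of an additive group. -/
def addTorsionSet (Q : Type*) [AddGroup Q] : Set Q := {x | ∃ n : ℕ, 0 < n ∧ n • x = 0}

/-- The subgroup `nA = {n•a : a ∈ A}` of an abelian group `A`, so that `A[n] := A ⧸ nA` is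
the largest quotient of `A` of exponent dividing `n`. -/
def nMultiples (n : ℕ) (A : Type*) [AddCommGroup A] : AddSubgroup A :=
  AddMonoidHom.range (n • AddMonoidHom.id A)

section Aux

variable {A C : Type*} [AddCommGroup A] [AddCommGroup C] (n : ℕ)

lemma mem_nMultiples {n : ℕ} {x : A} : x ∈ nMultiples n A ↔ ∃ y, n • y = x := by
  simp [nMultiples, AddMonoidHom.mem_range]

/-- transport quotient by `nMultiples` along an `AddEquiv`. -/
noncomputable def nMultQuotCongr (e : A ≃+ C) :
    (A ⧸ nMultiples n A) ≃+ (C ⧸ nMultiples n C) :=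
  QuotientAddGroup.congr _ _ e (by
    ext c
    simp only [AddSubgroup.mem_map, mem_nMultiples]
    constructor
    · rintro ⟨x, ⟨y, rfl⟩, rfl⟩
      exact ⟨e y, by simp⟩
    · rintro ⟨y, rfl⟩
      exact ⟨n • e.symm y, ⟨e.symm y, rfl⟩, by simp⟩)

lemma card_addTorsionSet_congr (e : A ≃+ C) :
    Nat.card (addTorsionSet A) = Nat.card (addTorsionSet C) := by
  have h : addTorsionSet C = ⇑e '' addTorsionSet A := by
    ext c
    constructor
    · rintro ⟨k, hk, hkc⟩
      exact ⟨e.symm c, ⟨k, hk, by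
        have : e.symm (k • c) = e.symm 0 := by rw [hkc]
        simpa using this⟩, by simp⟩
    · rintro ⟨a, ⟨k, hk, hka⟩, rfl⟩
      exact ⟨k, hk, by rw [← map_nsmul, hka, map_zero]⟩
  rw [h]
  exact Nat.card_congr (Equiv.Set.image _ _ e.injective)

/-- quotient of a product by `nMultiples` is the product of the quotients. -/
noncomputable def nMultQuotProd (G H : Type*) [AddCommGroup G] [AddCommGroup H] :
    ((G × H) ⧸ nMultiples n (G × H)) ≃+ (G ⧸ nMultiples n G) × (H ⧸ nMultiples n H) := by
  refine (QuotientAddGroup.quotientAddEquivOfEq ?_).trans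
    (QuotientAddGroup.quotientKerEquivOfSurjective
      ((QuotientAddGroup.mk' (nMultiples n G)).prodMap (QuotientAddGroup.mk' (nMultiples n H)))
      (Function.Surjective.prodMap
        (QuotientAddGroup.mk'_surjective _) (QuotientAddGroup.mk'_surjective _)))
  ext x
  rw [AddMonoidHom.mem_ker, mem_nMultiples]
  have hfx : ((QuotientAddGroup.mk' (nMultiples n G)).prodMap (QuotientAddGroup.mk' (nMultiples n H))) x
      = (QuotientAddGroup.mk x.1, QuotientAddGroup.mk x.2) := rfl
  rw [hfx, Prod.mk_eq_zero, QuotientAddGroup.eq_zero_iff, QuotientAddGroup.eq_zero_iff,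
    mem_nMultiples, mem_nMultiples]
  constructor
  · rintro ⟨⟨a, b⟩, h⟩
    exact ⟨⟨a, congrArg Prod.fst h⟩, ⟨b, congrArg Prod.snd h⟩⟩
  · rintro ⟨⟨a, ha⟩, ⟨b, hb⟩⟩
    exact ⟨(a, b), Prod.ext ha hb⟩

/-- quotient of a pi type by `nMultiples` is the pi of the quotients. -/
noncomputable def nMultQuotPi {ι : Type*} (G : ι → Type*) [∀ i, AddCommGroup (G i)] :
    ((∀ i, G i) ⧸ nMultiples n (∀ i, G i)) ≃+ (∀ i, G i ⧸ nMultiples n (G i)) := by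
  refine (QuotientAddGroup.quotientAddEquivOfEq ?_).trans
    (QuotientAddGroup.quotientKerEquivOfSurjective
      (AddMonoidHom.mk' (fun x i => QuotientAddGroup.mk (x i))
        (fun x y => funext fun i => rfl)) (fun g => ?_))
  · ext x
    rw [AddMonoidHom.mem_ker, mem_nMultiples, funext_iff]
    constructor
    · rintro ⟨y, rfl⟩ i
      rw [AddMonoidHom.mk'_apply, Pi.zero_apply, QuotientAddGroup.eq_zero_iff, mem_nMultiples]
      exact ⟨y i, rfl⟩
    · intro h
      have h' : ∀ i, ∃ y, n • y = x i := by
        intro i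
        have hi := h i
        rw [AddMonoidHom.mk'_apply, Pi.zero_apply, QuotientAddGroup.eq_zero_iff,
          mem_nMultiples] at hi
        exact hi
      choose y hy using h'
      exact ⟨y, funext hy⟩
  · choose x hx using fun i => QuotientAddGroup.mk_surjective (g i)
    exact ⟨x, funext hx⟩

lemma nMultiples_eq_bot (h : ∀ x : A, n • x = 0) : nMultiples n A = ⊥ := by
  ext x
  simp only [mem_nMultiples, AddSubgroup.mem_bot]
  constructor
  · rintro ⟨y, rfl⟩; exact h y
  · rintro rfl; exact ⟨0, smul_zero n⟩

lemma nMultiples_int : nMultiples n ℤ = AddSubgroup.zmultiples (n : ℤ) := by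
  ext x
  simp only [mem_nMultiples, AddSubgroup.mem_zmultiples_iff]
  constructor
  · rintro ⟨y, rfl⟩; exact ⟨y, by rw [smul_eq_mul, mul_comm]; simp⟩
  · rintro ⟨k, rfl⟩; exact ⟨k, by rw [smul_eq_mul, mul_comm]; simp⟩

lemma card_quot_int (hn : 0 < n) : Nat.card (ℤ ⧸ nMultiples n ℤ) = n := by
  haveI : NeZero n := ⟨hn.ne'⟩
  rw [Nat.card_congr ((QuotientAddGroup.quotientAddEquivOfEq (nMultiples_int n)).trans
    (Int.quotientZMultiplesNatEquivZMod n)).toEquiv]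
  simp [Nat.card_zmod]

lemma addTorsionSet_prod (G H : Type*) [AddCommGroup G] [AddCommGroup H] :
    addTorsionSet (G × H) = (addTorsionSet G) ×ˢ (addTorsionSet H) := by
  ext ⟨x, y⟩
  simp only [addTorsionSet, Set.mem_setOf_eq, Set.mem_prod, Prod.smul_mk, Prod.mk_eq_zero]
  constructor
  · rintro ⟨k, hk, h1, h2⟩
    exact ⟨⟨k, hk, h1⟩, ⟨k, hk, h2⟩⟩
  · rintro ⟨⟨k1, hk1, h1⟩, ⟨k2, hk2, h2⟩⟩
    refine ⟨k1 * k2, Nat.mul_pos hk1 hk2, ?_, ?_⟩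
    · rw [mul_nsmul _ k1 k2, h1, smul_zero]
    · rw [mul_comm, mul_nsmul _ k2 k1, h2, smul_zero]

lemma addTorsionSet_torsionfree {ι : Type*} : addTorsionSet (ι →₀ ℤ) = {0} := by
  ext x
  simp only [addTorsionSet, Set.mem_setOf_eq, Set.mem_singleton_iff]
  constructor
  · rintro ⟨k, hk, hkx⟩
    ext i
    have : (k • x) i = 0 := by rw [hkx]; rfl
    rw [Finsupp.smul_apply, smul_eq_zero] at this
    simpa using this.resolve_left (by exact_mod_cast hk.ne')
  · rintro rfl; exact ⟨1, one_pos, smul_zero 1⟩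

lemma addTorsionSet_finite (G : Type*) [AddCommGroup G] [Finite G] :
    addTorsionSet G = Set.univ := by
  ext x
  simp only [Set.mem_univ, iff_true, addTorsionSet, Set.mem_setOf_eq]
  exact ⟨Nat.card G, Nat.card_pos, card_nsmul_eq_zero'⟩

lemma card_quot_free_prod (r : ℕ) (hn : 0 < n) (T : Type*) [AddCommGroup T]
    {G : Type*} [AddCommGroup G] (f : G ≃+ (Fin r →₀ ℤ) × T) :
    Nat.card (G ⧸ nMultiples n G) = n ^ r * Nat.card (T ⧸ nMultiples n T) := by
  rw [Nat.card_congr ((nMultQuotCongr n f).trans (nMultQuotProd n _ _)).toEquiv, Nat.card_prod]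
  congr 1
  rw [Nat.card_congr ((nMultQuotCongr n
    (Finsupp.linearEquivFunOnFinite ℤ ℤ (Fin r)).toAddEquiv).trans
      (nMultQuotPi n (fun _ : Fin r => ℤ))).toEquiv, Nat.card_pi]
  simp [card_quot_int n hn]

lemma card_torsion_free_prod (r : ℕ) (T : Type*) [AddCommGroup T] [Finite T]
    {G : Type*} [AddCommGroup G] (f : G ≃+ (Fin r →₀ ℤ) × T) :
    Nat.card (addTorsionSet G) = Nat.card T := by
  rw [card_addTorsionSet_congr f, addTorsionSet_prod,
    Nat.card_congr (Equiv.Set.prod _ _), Nat.card_prod,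
    addTorsionSet_torsionfree, addTorsionSet_finite]
  simp

end Aux

/-- Lemma 3(2): let `A`, `B` be finitely generated abelian groups, `t(A)` the order of the
torsion subgroup of `A`, and `n = t(A) * m` with `m > 1` an integer. If `A/nA ≅ B/nB` then
`t(B) ≥ t(A)`. -/
theorem torsion_le_of_quotient_iso (A B : Type*) [AddCommGroup A] [AddCommGroup B]
    [AddGroup.FG A] [AddGroup.FG B] (m n : ℕ) (hm : 1 < m)
    (hn : n = Nat.card (addTorsionSet A) * m)
    (hiso : Nonempty ((A ⧸ nMultiples n A) ≃+ (B ⧸ nMultiples n B))) :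
    Nat.card (addTorsionSet A) ≤ Nat.card (addTorsionSet B) := by
  obtain ⟨rA, ιA, fιA, pA, hpA, eA, ⟨fA⟩⟩ := AddCommGroup.equiv_free_prod_directSum_zmod A
  obtain ⟨rB, ιB, fιB, pB, hpB, eB, ⟨fB⟩⟩ := AddCommGroup.equiv_free_prod_directSum_zmod B
  set TA := DirectSum ιA (fun i => ZMod (pA i ^ eA i)) with hTA
  set TB := DirectSum ιB (fun i => ZMod (pB i ^ eB i)) with hTB
  haveI : ∀ i, NeZero (pA i ^ eA i) := fun i => ⟨pow_ne_zero _ (hpA i).pos.ne'⟩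
  haveI : ∀ i, NeZero (pB i ^ eB i) := fun i => ⟨pow_ne_zero _ (hpB i).pos.ne'⟩
  haveI : Finite TA := Finite.of_equiv _ DFinsupp.equivFunOnFintype.symm
  haveI : Finite TB := Finite.of_equiv _ DFinsupp.equivFunOnFintype.symm
  have htA : Nat.card (addTorsionSet A) = Nat.card TA := card_torsion_free_prod rA TA fA
  have htB : Nat.card (addTorsionSet B) = Nat.card TB := card_torsion_free_prod rB TB fB
  rw [htA, htB]
  set tA := Nat.card TA with htA'
  set tB := Nat.card TB with htB'
  rw [htA] at hn
  have htApos : 0 < tA := Nat.card_pos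
  have htBpos : 0 < tB := Nat.card_pos
  have hnpos : 0 < n := by rw [hn]; positivity
  -- `nMultiples n TA = ⊥`
  have hbot : nMultiples n TA = ⊥ := by
    apply nMultiples_eq_bot
    intro x
    rw [hn, mul_nsmul]
    rw [htA', card_nsmul_eq_zero', smul_zero]
  have hqA : Nat.card (TA ⧸ nMultiples n TA) = tA := by
    rw [hbot, Nat.card_congr (QuotientAddGroup.quotientBot (G := TA)).toEquiv]
  set cB := Nat.card (TB ⧸ nMultiples n TB) with hcB'
  haveI : Finite (TB ⧸ nMultiples n TB) := Quotient.finite _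
  have hcBpos : 0 < cB := Nat.card_pos
  have hcBle : cB ≤ tB :=
    Nat.card_le_card_of_surjective _ (QuotientAddGroup.mk'_surjective (nMultiples n TB))
  have cardEq : n ^ rA * tA = n ^ rB * cB := by
    rw [← hqA, ← card_quot_free_prod n rA hnpos TA fA, ← card_quot_free_prod n rB hnpos TB fB]
    exact Nat.card_congr hiso.some.toEquiv
  rcases le_or_gt rB rA with h | h
  · have heq : n ^ rB * (n ^ (rA - rB) * tA) = n ^ rB * cB := by
      rw [← mul_assoc, ← pow_add, Nat.add_sub_cancel' h]
      exact cardEq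
    have hc : n ^ (rA - rB) * tA = cB :=
      Nat.eq_of_mul_eq_mul_left (Nat.pow_pos hnpos) heq
    calc tA ≤ n ^ (rA - rB) * tA :=
          Nat.le_mul_of_pos_left _ (Nat.pow_pos hnpos)
      _ = cB := hc
      _ ≤ tB := hcBle
  · exfalso
    have heq : n ^ rA * tA = n ^ rA * (n ^ (rB - rA) * cB) := by
      rw [← mul_assoc, ← pow_add, Nat.add_sub_cancel' h.le]
      exact cardEq
    have hc : tA = n ^ (rB - rA) * cB :=
      Nat.eq_of_mul_eq_mul_left (Nat.pow_pos hnpos) heq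
    have h1 : n ≤ n ^ (rB - rA) := Nat.le_self_pow (Nat.sub_ne_zero_of_lt h) n
    have h2 : n ≤ tA := by
      rw [hc]
      calc n ≤ n ^ (rB - rA) := h1
        _ ≤ n ^ (rB - rA) * cB := Nat.le_mul_of_pos_right _ hcBpos
    have h3 : tA * 2 ≤ tA * m := Nat.mul_le_mul_left tA hm
    omega
end

section
/- Let G be a finite group, p a prime, and M a finitely generated ℤG-module which is torsion-free as a ℤ-module and such that M ⊗_ℤ ℚ is generated by d elements as a ℚG-module. Let m₁, …, m_d ∈ M generate a ℤG-submodule of infinite index in M. Then there exist elements h₁, …, h_d ∈ M such that, defining K_n to be the ℤG-submodule of M generated by m₁ + pⁿh₁, …, m_d + pⁿh_d, one has t_p(M/K_n) → ∞ as n → ∞. -/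
/-- Coefficientwise cast `ℤG → ℚG` of group-ring elements. -/
noncomputable def intCastMA (G : Type*) (x : MonoidAlgebra ℤ G) : MonoidAlgebra ℚ G :=
  MonoidAlgebra.ofCoeff (Finsupp.mapRange (fun n : ℤ => (n : ℚ)) Int.cast_zero x.coeff)

set_option linter.unusedSectionVars false

open Filter Submodule Function Set

section Aux

variable {G : Type*} [Group G] [Finite G]

lemma intCastMA_apply (x : MonoidAlgebra ℤ G) (g : G) : (intCastMA G x).coeff g = ((x.coeff g : ℤ) : ℚ) :=
  Finsupp.mapRange_apply (hf := Int.cast_zero)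

lemma intCastMA_add (a b : MonoidAlgebra ℤ G) :
    intCastMA G (a + b) = intCastMA G a + intCastMA G b := by
  unfold intCastMA
  rw [MonoidAlgebra.coeff_add, Finsupp.mapRange_add (fun x y => Int.cast_add x y), MonoidAlgebra.ofCoeff_add]

lemma intCastMA_single (g : G) (n : ℤ) :
    intCastMA G (MonoidAlgebra.single g n) = MonoidAlgebra.single g (n : ℚ) := by
  unfold intCastMA
  rw [MonoidAlgebra.coeff_single, Finsupp.mapRange_single, MonoidAlgebra.ofCoeff_single]

variable {M : Type*} [AddCommGroup M] [Module (MonoidAlgebra ℤ G) M]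
  {𝓜 : Type*} [AddCommGroup 𝓜] [Module ℚ 𝓜] [Module (MonoidAlgebra ℚ G) 𝓜]
  [IsScalarTower ℚ (MonoidAlgebra ℚ G) 𝓜]

lemma iota_smul (ι : M →+ 𝓜)
    (hequiv : ∀ (g : G) (x : M),
      ι (MonoidAlgebra.of ℤ G g • x) = MonoidAlgebra.of ℚ G g • ι x)
    (a : MonoidAlgebra ℤ G) (x : M) : ι (a • x) = intCastMA G a • ι x := by
  induction a using MonoidAlgebra.induction_linear with
  | zero => simp [intCastMA]
  | add a b ha hb => rw [add_smul, map_add, ha, hb, intCastMA_add, add_smul]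
  | single g n =>
      rw [intCastMA_single]
      have h1 : (MonoidAlgebra.single g n : MonoidAlgebra ℤ G) = n • MonoidAlgebra.of ℤ G g := by
        rw [MonoidAlgebra.of_apply]
        rw [MonoidAlgebra.smul_single]
        norm_num
      have h2 : (MonoidAlgebra.single g (n : ℚ) : MonoidAlgebra ℚ G) = n • MonoidAlgebra.of ℚ G g := by
        rw [MonoidAlgebra.of_apply]
        rw [MonoidAlgebra.smul_single]
        norm_num
      rw [h1, h2, smul_assoc, map_zsmul, hequiv, smul_assoc]

lemma clear_denoms {k : ℕ} (q : Fin k → MonoidAlgebra ℚ G) :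
    ∃ N : ℤ, 0 < N ∧ ∀ i, ∃ z : MonoidAlgebra ℤ G, intCastMA G z = N • q i := by
  haveI := Fintype.ofFinite G
  set N : ℤ := ∏ i : Fin k, ∏ g : G, (((q i).coeff g).den : ℤ) with hNdef
  refine ⟨N, ?_, ?_⟩
  · exact Finset.prod_pos fun i _ => Finset.prod_pos fun g _ => by
      exact_mod_cast ((q i).coeff g).pos
  · intro i
    have hdvd : ∀ g : G, (((q i).coeff g).den : ℤ) ∣ N := by
      intro g
      exact dvd_trans (Finset.dvd_prod_of_mem (fun g => (((q i).coeff g).den : ℤ)) (Finset.mem_univ g))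
        (Finset.dvd_prod_of_mem (fun j => ∏ g : G, (((q j).coeff g).den : ℤ)) (Finset.mem_univ i))
    have key : ∀ g : G, ∃ z : ℤ, (z : ℚ) = (N : ℚ) * (q i).coeff g := by
      intro g
      obtain ⟨c, hc⟩ := hdvd g
      refine ⟨c * ((q i).coeff g).num, ?_⟩
      have hden : (((q i).coeff g).den : ℚ) * (q i).coeff g = ((q i).coeff g).num := by
        rw [mul_comm, Rat.mul_den_eq_num]
      have hc' : (N : ℚ) = (((q i).coeff g).den : ℚ) * (c : ℚ) := by exact_mod_cast hc
      push_cast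
      rw [hc', ← hden]
      ring
    choose f hf using key
    refine ⟨MonoidAlgebra.ofCoeff (Finsupp.equivFunOnFinite.symm f), ?_⟩
    ext g
    rw [intCastMA_apply]
    show ((Finsupp.equivFunOnFinite.symm f) g : ℚ) = _
    rw [Finsupp.coe_equivFunOnFinite_symm, hf g, MonoidAlgebra.coeff_smul_apply]
    rw [← Int.cast_smul_eq_zsmul ℚ, smul_eq_mul]

end Aux

section Fin2

variable {G : Type*} [Group G] [Finite G]
  {M : Type*} [AddCommGroup M] [Module (MonoidAlgebra ℤ G) M]
  {𝓜 : Type*} [AddCommGroup 𝓜] [Module ℚ 𝓜] [Module (MonoidAlgebra ℚ G) 𝓜]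
  [IsScalarTower ℚ (MonoidAlgebra ℚ G) 𝓜]

lemma finite_quotient_of_qspan
    [Module.Finite (MonoidAlgebra ℤ G) M]
    (ι : M →+ 𝓜) (hinj : Function.Injective ι)
    (hequiv : ∀ (g : G) (x : M),
      ι (MonoidAlgebra.of ℤ G g • x) = MonoidAlgebra.of ℚ G g • ι x)
    {k : ℕ} (v : Fin k → M)
    (hv : Submodule.span (MonoidAlgebra ℚ G) (Set.range fun i => ι (v i)) = ⊤) :
    Finite (M ⧸ Submodule.span (MonoidAlgebra ℤ G) (Set.range v)) := by
  haveI := Fintype.ofFinite G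
  haveI : Module.Finite ℤ (MonoidAlgebra ℤ G) :=
    Module.Finite.equiv ((Finsupp.linearEquivFunOnFinite ℤ ℤ G).symm.trans (MonoidAlgebra.coeffLinearEquiv ℤ).symm)
  haveI : Module.Finite ℤ M := Module.Finite.trans (MonoidAlgebra ℤ G) M
  set K := Submodule.span (MonoidAlgebra ℤ G) (Set.range v) with hK
  haveI : Module.Finite ℤ (M ⧸ K) :=
    Module.Finite.of_surjective (K.mkQ.restrictScalars ℤ) (Submodule.mkQ_surjective K)
  haveI : AddGroup.FG (M ⧸ K) := Module.Finite.iff_addGroup_fg.mp inferInstance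
  apply AddCommGroup.finite_of_fg_torsion
  intro xb
  obtain ⟨x, rfl⟩ := Submodule.mkQ_surjective K xb
  have hx : ι x ∈ Submodule.span (MonoidAlgebra ℚ G) (Set.range fun i => ι (v i)) := by
    rw [hv]; trivial
  obtain ⟨cq, hcq⟩ := (mem_span_range_iff_exists_fun _).1 hx
  obtain ⟨N, hN, hz⟩ := clear_denoms cq
  choose z hzz using hz
  have key : N • x = ∑ i, z i • v i := by
    apply hinj
    rw [map_zsmul, ← hcq, map_sum, Finset.smul_sum]
    refine Finset.sum_congr rfl fun i _ => ?_
    rw [iota_smul ι hequiv, hzz, ← Int.cast_smul_eq_zsmul ℚ N (cq i • ι (v i)), ← smul_assoc,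
      Int.cast_smul_eq_zsmul ℚ N (cq i)]
  have hmem : N • x ∈ K :=
    key ▸ Submodule.sum_mem _ fun i _ =>
      Submodule.smul_mem _ _ (Submodule.subset_span ⟨i, rfl⟩)
  have hmk : K.mkQ (N • x) = 0 := by
    rw [Submodule.mkQ_apply, Submodule.Quotient.mk_eq_zero]; exact hmem
  refine isOfFinAddOrder_iff_nsmul_eq_zero.2 ⟨N.toNat, by omega, ?_⟩
  have hcast : ((N.toNat : ℤ)) = N := by omega
  rw [← natCast_zsmul, hcast, ← map_zsmul K.mkQ, hmk]

end Fin2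

/-- Lemma: let `G` be a finite group and `p` a prime. Let `M` be a finitely generated
`ℤG`-module, torsion-free as a `ℤ`-module, such that `M ⊗_ℤ ℚ` (realized as any `ℚG`-module
`𝓜` containing `M` via `ι : m ↦ 1 ⊗ m`, with `𝓜 = ℚ·ι(M)`) is `d`-generated as a
`ℚG`-module.  Let `m₁, …, m_d ∈ M` generate a `ℤG`-submodule of infinite index in `M`.
Then there are `h₁, …, h_d ∈ M` such that, with `K_n` the `ℤG`-submodule of `M` generated
by the `mᵢ + pⁿ hᵢ`, the `p`-part `t_p(M / K_n)` of the torsion of `M / K_n` tends to `∞`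
as `n → ∞`. -/
theorem tendsto_torsion_quotient_perturbed_submodule
    (p : ℕ) (hp : p.Prime) (G : Type*) [Group G] [Finite G]
    (M : Type*) [AddCommGroup M] [Module (MonoidAlgebra ℤ G) M]
    [Module.Finite (MonoidAlgebra ℤ G) M] [NoZeroSMulDivisors ℤ M]
    (𝓜 : Type*) [AddCommGroup 𝓜] [Module ℚ 𝓜] [Module (MonoidAlgebra ℚ G) 𝓜]
    [IsScalarTower ℚ (MonoidAlgebra ℚ G) 𝓜]
    (ι : M →+ 𝓜) (hinj : Function.Injective ι)
    (hequiv : ∀ (g : G) (x : M),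
      ι (MonoidAlgebra.of ℤ G g • x) = MonoidAlgebra.of ℚ G g • ι x)
    (hdiv : ∀ y : 𝓜, ∃ (c : ℤ) (x : M), c ≠ 0 ∧ (c : ℚ) • y = ι x)
    (d : ℕ)
    (hgen : ∃ y : Fin d → 𝓜, Submodule.span (MonoidAlgebra ℚ G) (Set.range y) = ⊤)
    (m : Fin d → M)
    (hU : Infinite (M ⧸ Submodule.span (MonoidAlgebra ℤ G) (Set.range m))) :
    ∃ h : Fin d → M,
      Filter.Tendsto
        (fun n : ℕ => p ^ ((Nat.card (addTorsionSet
          (M ⧸ Submodule.span (MonoidAlgebra ℤ G)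
            (Set.range fun i => m i + ((p : ℤ) ^ n) • h i)))).factorization p))
        Filter.atTop Filter.atTop := by
  classical
  haveI := Fintype.ofFinite G
  obtain ⟨y, hy⟩ := hgen
  choose c x hc hcx using fun i => hdiv (y i)
  refine ⟨x, ?_⟩
  have scomm : ∀ (q : ℚ) (r : MonoidAlgebra ℚ G) (w : 𝓜), r • (q • w) = q • (r • w) := by
    intro q r w
    rw [← IsScalarTower.algebraMap_smul (MonoidAlgebra ℚ G) q w, ← mul_smul, ← Algebra.commutes,
      mul_smul, IsScalarTower.algebraMap_smul]
  haveI : Module.Finite ℤ (MonoidAlgebra ℤ G) :=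
    Module.Finite.equiv ((Finsupp.linearEquivFunOnFinite ℤ ℤ G).symm.trans (MonoidAlgebra.coeffLinearEquiv ℤ).symm)
  haveI : Module.Finite ℤ M := Module.Finite.trans (MonoidAlgebra ℤ G) M
  -- `𝓜` is a finite-dimensional `ℚ`-vector space
  obtain ⟨s, hs⟩ := Module.Finite.fg_top (R := ℤ) (M := M)
  have himg : ∀ u : M, ι u ∈ Submodule.span ℚ (⇑ι '' ↑s) := by
    intro u
    have hu : u ∈ Submodule.span ℤ (↑s : Set M) := by rw [hs]; trivial
    induction hu using Submodule.span_induction with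
    | mem w hw => exact Submodule.subset_span ⟨w, hw, rfl⟩
    | zero => simpa using Submodule.zero_mem _
    | add a b _ _ ha hb => rw [map_add]; exact Submodule.add_mem _ ha hb
    | smul n a _ ha => rw [map_zsmul]; exact zsmul_mem ha n
  haveI : FiniteDimensional ℚ 𝓜 := by
    refine ⟨⟨s.image ι, ?_⟩⟩
    rw [Finset.coe_image, eq_top_iff]
    rintro zz -
    obtain ⟨c0, x0, hc0, hx0⟩ := hdiv zz
    have hzz : zz = (c0 : ℚ)⁻¹ • ι x0 := by
      rw [← hx0, smul_smul, inv_mul_cancel₀ (by exact_mod_cast hc0), one_smul]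
    rw [hzz]
    exact Submodule.smul_mem _ _ (himg x0)
  -- the two linear maps
  let Al : (Fin d → MonoidAlgebra ℚ G) →ₗ[ℚ] 𝓜 :=
    { toFun := fun v => ∑ i, v i • ι (m i)
      map_add' := by intro v w; simp [add_smul, Finset.sum_add_distrib]
      map_smul' := by intro q v; simp [Finset.smul_sum, smul_assoc] }
  let Bl : (Fin d → MonoidAlgebra ℚ G) →ₗ[ℚ] 𝓜 :=
    { toFun := fun v => ∑ i, v i • ι (x i)
      map_add' := by intro v w; simp [add_smul, Finset.sum_add_distrib]
      map_smul' := by intro q v; simp [Finset.smul_sum, smul_assoc] }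
  have hBsurj : LinearMap.range Bl = ⊤ := by
    rw [eq_top_iff]
    rintro zz -
    have hz : zz ∈ Submodule.span (MonoidAlgebra ℚ G) (Set.range y) := by rw [hy]; trivial
    obtain ⟨a, ha⟩ := (mem_span_range_iff_exists_fun _).1 hz
    refine ⟨fun i => (c i : ℚ)⁻¹ • a i, ?_⟩
    show ∑ i, ((c i : ℚ)⁻¹ • a i) • ι (x i) = zz
    rw [← ha]
    refine Finset.sum_congr rfl fun i _ => ?_
    rw [smul_assoc, ← hcx i, scomm ((c i : ℚ)) (a i) (y i), smul_smul,
      inv_mul_cancel₀ (by exact_mod_cast hc i), one_smul]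
  obtain ⟨σ, hσ⟩ := Bl.exists_rightInverse_of_surjective hBsurj
  let Cl : Module.End ℚ 𝓜 := Al ∘ₗ σ
  have hfin := Module.End.finite_hasEigenvalue Cl
  have hmono : StrictMono (fun n : ℕ => ((p : ℚ)) ^ n) := fun a b hab =>
    pow_lt_pow_right₀ (by exact_mod_cast hp.one_lt) hab
  have hbadfin : {n : ℕ | Cl.HasEigenvalue (-((p : ℚ) ^ n))}.Finite := by
    have hsub : {n : ℕ | Cl.HasEigenvalue (-((p : ℚ) ^ n))} ⊆
        (fun n : ℕ => -((p : ℚ) ^ n)) ⁻¹' (setOf Cl.HasEigenvalue) := fun n hn => hn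
    exact (Set.Finite.preimage ((neg_injective.comp hmono.injective).injOn) hfin).subset hsub
  obtain ⟨Nbd, hNbd⟩ := hbadfin.bddAbove
  -- a surjection `M →+ ℤ` killing `K₀`
  set K0 := Submodule.span (MonoidAlgebra ℤ G) (Set.range m) with hK0
  haveI : Module.Finite ℤ (M ⧸ K0) :=
    Module.Finite.of_surjective (K0.mkQ.restrictScalars ℤ) (Submodule.mkQ_surjective K0)
  set τ := Submodule.torsion ℤ (M ⧸ K0) with hτ
  haveI : Module.Finite ℤ ((M ⧸ K0) ⧸ τ) :=
    Module.Finite.of_surjective τ.mkQ (Submodule.mkQ_surjective τ)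
  haveI hU' : Infinite (M ⧸ K0) := hU
  haveI : Nonempty (Module.Free.ChooseBasisIndex ℤ ((M ⧸ K0) ⧸ τ)) := by
    by_contra hne
    rw [not_nonempty_iff] at hne
    haveI : Subsingleton ((M ⧸ K0) ⧸ τ) :=
      (Module.Free.chooseBasis ℤ ((M ⧸ K0) ⧸ τ)).repr.toEquiv.subsingleton
    have htors : AddMonoid.IsTorsion (M ⧸ K0) := by
      intro a
      have ha : Submodule.Quotient.mk (p := τ) a = 0 := Subsingleton.elim _ _
      rw [Submodule.Quotient.mk_eq_zero] at ha
      obtain ⟨⟨nz, hnz⟩, hna⟩ := ha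
      have hnz0 : nz ≠ 0 := nonZeroDivisors.ne_zero hnz
      refine isOfFinAddOrder_iff_nsmul_eq_zero.2 ⟨nz.natAbs, by omega, ?_⟩
      have hna' : nz • a = 0 := hna
      rcases Int.natAbs_eq nz with hcase | hcase
      · rw [← natCast_zsmul, ← hcase, hna']
      · rw [← natCast_zsmul, ← neg_neg ((nz.natAbs : ℤ)), ← hcase, neg_zsmul, hna', neg_zero]
    haveI : AddGroup.FG (M ⧸ K0) := Module.Finite.iff_addGroup_fg.mp inferInstance
    haveI := AddCommGroup.finite_of_fg_torsion _ htors
    exact not_finite (M ⧸ K0)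
  let i0 := Classical.arbitrary (Module.Free.ChooseBasisIndex ℤ ((M ⧸ K0) ⧸ τ))
  let b := Module.Free.chooseBasis ℤ ((M ⧸ K0) ⧸ τ)
  let coordF := b.coord i0
  have hcoord : Function.Surjective coordF := by
    intro t
    refine ⟨t • b i0, ?_⟩
    simp [coordF, Module.Basis.coord_apply, Module.Basis.repr_self]
  let sZ : M →+ ℤ :=
    (coordF.toAddMonoidHom.comp τ.mkQ.toAddMonoidHom).comp (K0.mkQ).toAddMonoidHom
  have hsZsurj : Function.Surjective sZ :=
    (hcoord.comp (Submodule.mkQ_surjective τ)).comp (Submodule.mkQ_surjective K0)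
  have hsZ0 : ∀ u ∈ K0, sZ u = 0 := by
    intro u hu
    show coordF (τ.mkQ (K0.mkQ u)) = 0
    have h0 : K0.mkQ u = 0 := by
      rw [Submodule.mkQ_apply, Submodule.Quotient.mk_eq_zero]; exact hu
    rw [h0, map_zero, map_zero]
  have hzsmulcomm : ∀ (a : MonoidAlgebra ℤ G) (t : ℤ) (w : M), a • (t • w) = t • (a • w) := by
    intro a t w
    rw [← Int.cast_smul_eq_zsmul (MonoidAlgebra ℤ G), ← mul_smul, ← Int.cast_comm, mul_smul,
      Int.cast_smul_eq_zsmul]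
  -- the eventual estimate
  refine Filter.tendsto_atTop_mono' Filter.atTop ?_
    (tendsto_pow_atTop_atTop_of_one_lt hp.one_lt)
  filter_upwards [Filter.eventually_gt_atTop Nbd] with n hn
  have hnotev : ¬ Cl.HasEigenvalue (-((p : ℚ) ^ n)) := fun hcontra =>
    absurd (hNbd hcontra) (not_le.2 hn)
  have hkerbot : LinearMap.ker (Cl + (p : ℚ) ^ n • (1 : Module.End ℚ 𝓜)) = ⊥ := by
    rw [eq_bot_iff]
    intro u hu
    rw [LinearMap.mem_ker] at hu
    simp only [LinearMap.add_apply, LinearMap.smul_apply, Module.End.one_apply] at hu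
    rw [Submodule.mem_bot]
    by_contra hu0
    apply hnotev
    apply Module.End.hasEigenvalue_of_hasEigenvector (x := u)
    refine ⟨Module.End.mem_eigenspace_iff.2 ?_, hu0⟩
    rw [neg_smul]
    exact eq_neg_of_add_eq_zero_left hu
  have hDsurj : Function.Surjective (Cl + (p : ℚ) ^ n • (1 : Module.End ℚ 𝓜)) :=
    LinearMap.injective_iff_surjective.1 (LinearMap.ker_eq_bot.1 hkerbot)
  have h1 : ∀ i, ι (m i + ((p : ℤ) ^ n) • x i) = ι (m i) + ((p : ℚ) ^ n) • ι (x i) := by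
    intro i
    rw [map_add, map_zsmul, ← Int.cast_smul_eq_zsmul ℚ ((p : ℤ) ^ n) (ι (x i))]
    norm_num
  have hspan : Submodule.span (MonoidAlgebra ℚ G)
      (Set.range fun i => ι (m i + ((p : ℤ) ^ n) • x i)) = ⊤ := by
    rw [eq_top_iff]
    rintro zz -
    obtain ⟨u, hu⟩ := hDsurj zz
    have hBσ : Bl (σ u) = u := by rw [← LinearMap.comp_apply, hσ]; rfl
    have hrep : zz = ∑ i, (σ u) i • ι (m i + ((p : ℤ) ^ n) • x i) := by
      have hz1 : zz = Al (σ u) + (p : ℚ) ^ n • Bl (σ u) := by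
        rw [hBσ, ← hu]
        simp [Cl]
      rw [hz1]
      show (∑ i, (σ u) i • ι (m i)) + (p : ℚ) ^ n • ∑ i, (σ u) i • ι (x i) = _
      rw [Finset.smul_sum, ← Finset.sum_add_distrib]
      refine Finset.sum_congr rfl fun i _ => ?_
      rw [h1 i, smul_add, scomm ((p : ℚ) ^ n) ((σ u) i) (ι (x i))]
    rw [hrep]
    exact Submodule.sum_mem _ fun i _ =>
      Submodule.smul_mem _ _ (Submodule.subset_span ⟨i, rfl⟩)
  set Kn := Submodule.span (MonoidAlgebra ℤ G)
    (Set.range fun i => m i + ((p : ℤ) ^ n) • x i) with hKn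
  haveI hKfin : Finite (M ⧸ Kn) :=
    finite_quotient_of_qspan ι hinj hequiv _ hspan
  haveI : NeZero (p ^ n) := ⟨pow_ne_zero n hp.pos.ne'⟩
  let sn : M →+ ZMod (p ^ n) := (Int.castAddHom (ZMod (p ^ n))).comp sZ
  have hsnK : ∀ u ∈ Kn, sn u = 0 := by
    intro u hu
    obtain ⟨a, ha⟩ := (mem_span_range_iff_exists_fun _).1 hu
    rw [← ha, map_sum]
    refine Finset.sum_eq_zero fun i _ => ?_
    rw [smul_add, hzsmulcomm, map_add, map_zsmul]
    have hA : sn (a i • m i) = 0 := by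
      show (Int.castAddHom (ZMod (p ^ n))) (sZ (a i • m i)) = 0
      rw [hsZ0 _ (Submodule.smul_mem _ _ (Submodule.subset_span ⟨i, rfl⟩))]
      simp
    rw [hA, zero_add, zsmul_eq_mul]
    have hcast0 : (((p : ℤ) ^ n : ℤ) : ZMod (p ^ n)) = 0 := by
      push_cast
      exact_mod_cast ZMod.natCast_self (p ^ n)
    rw [hcast0, zero_mul]
  have hle : Kn.toAddSubgroup ≤ sn.ker := fun u hu => hsnK u hu
  have hsnsurj : Function.Surjective sn := by
    intro t
    obtain ⟨z0, hz0⟩ := ZMod.intCast_surjective (n := p ^ n) t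
    obtain ⟨u, hu⟩ := hsZsurj z0
    exact ⟨u, by simpa [sn, hu] using hz0⟩
  have hindex : (sn.ker).index = p ^ n := by
    have e := QuotientAddGroup.quotientKerEquivOfSurjective sn hsnsurj
    have hrfl : (sn.ker).index = Nat.card (M ⧸ sn.ker) := rfl
    rw [hrfl, Nat.card_congr e.toEquiv, Nat.card_zmod]
  have hdvd : p ^ n ∣ Nat.card (M ⧸ Kn) := by
    have h2 := AddSubgroup.index_dvd_of_le hle
    rw [hindex] at h2
    exact h2
  have htorset : addTorsionSet (M ⧸ Kn) = Set.univ := by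
    ext zq
    simp only [addTorsionSet, Set.mem_setOf_eq, Set.mem_univ, iff_true]
    exact ⟨addOrderOf zq, addOrderOf_pos zq, addOrderOf_nsmul_eq_zero zq⟩
  have hcardpos : Nat.card (M ⧸ Kn) ≠ 0 := Nat.card_pos.ne'
  have hfact : n ≤ (Nat.card (M ⧸ Kn)).factorization p :=
    (Nat.Prime.pow_dvd_iff_le_factorization hp hcardpos).1 hdvd
  show p ^ n ≤ p ^ ((Nat.card (addTorsionSet (M ⧸ Kn))).factorization p)
  rw [htorset]
  rw [Nat.card_univ]
  exact Nat.pow_le_pow_right hp.one_lt.le hfact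
end

section
/- Let p be a prime, G a finite group, and A an abelian pro-p group which is a finitely generated ℤ_pG-module. Let dim A denote the torsion-free rank of A as a ℤ_p-module. Then t(A/(G−1)A) ≤ t(A)·|G|^{dim A}, where (G−1)A is the submodule of A generated by all elements (g−1)a with g ∈ G, a ∈ A. -/
variable (p : ℕ) [Fact p.Prime] (G : Type*) [Group G] (A : Type*) [AddCommGroup A]
  [Module ℤ_[p] A] [Module (MonoidAlgebra ℤ_[p] G) A]
  [IsScalarTower ℤ_[p] (MonoidAlgebra ℤ_[p] G) A]

/-- The fixed-point submodule `A^G = {a ∈ A ∣ g • a = a for all g ∈ G}`. -/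
def fixedSubmodule : Submodule ℤ_[p] A where
  carrier := {a | ∀ g : G, (MonoidAlgebra.of ℤ_[p] G g) • a = a}
  add_mem' := fun ha hb => fun g => by rw [smul_add, ha g, hb g]
  zero_mem' := fun g => smul_zero _
  smul_mem' := fun c a ha => fun g => by
    rw [← algebraMap_smul (MonoidAlgebra ℤ_[p] G) c a, ← mul_smul, ← Algebra.commutes,
      mul_smul, ha g]

/-- The submodule `(G−1)A`, generated by all elements `g • a - a` with `g ∈ G`, `a ∈ A`. -/
noncomputable def augmentationSubmodule : Submodule ℤ_[p] A :=
  Submodule.span ℤ_[p] {x | ∃ (g : G) (a : A), x = (MonoidAlgebra.of ℤ_[p] G g) • a - a}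

section AuxLemmas

open Submodule

variable {p}

/-- Every torsion element of a `ℤ_[p]`-module is killed by a power of `p`. -/
lemma padic_torsion_killed {M : Type*} [AddCommGroup M] [Module ℤ_[p] M] {x : M}
    (hx : x ∈ Submodule.torsion ℤ_[p] M) : ∃ k : ℕ, (p : ℤ_[p]) ^ k • x = 0 := by
  obtain ⟨⟨c, hc⟩, h⟩ := hx
  have hc0 : c ≠ 0 := nonZeroDivisors.ne_zero hc
  obtain ⟨k, u, hu⟩ : ∃ (k : ℕ) (u : ℤ_[p]ˣ), c = (u : ℤ_[p]) * (p : ℤ_[p]) ^ k :=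
    ⟨_, _, PadicInt.unitCoeff_spec hc0⟩
  refine ⟨k, ?_⟩
  have hinv : ((u⁻¹ : ℤ_[p]ˣ) : ℤ_[p]) * c = (p : ℤ_[p]) ^ k := by
    rw [hu, ← mul_assoc, Units.inv_mul, one_mul]
  have h' : c • x = 0 := h
  rw [← hinv, mul_smul, h', smul_zero]

/-- `addTorsionSet` coincides with the `ℤ_[p]`-torsion submodule. -/
lemma addTorsionSet_eq_torsion (M : Type*) [AddCommGroup M] [Module ℤ_[p] M] :
    addTorsionSet M = (Submodule.torsion ℤ_[p] M : Set M) := by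
  ext x
  constructor
  · rintro ⟨n, hn, h⟩
    refine ⟨⟨(n : ℤ_[p]), mem_nonZeroDivisors_of_ne_zero (by exact_mod_cast hn.ne')⟩, ?_⟩
    simpa [Nat.cast_smul_eq_nsmul] using h
  · intro hx
    obtain ⟨k, hk⟩ := padic_torsion_killed hx
    refine ⟨p ^ k, pow_pos (Fact.out : p.Prime).pos _, ?_⟩
    have : ((p ^ k : ℕ) : ℤ_[p]) • x = 0 := by push_cast; exact hk
    rwa [Nat.cast_smul_eq_nsmul] at this

/-- A span of finitely many elements each killed by `p^k` is finite of size at most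
`(p^k)^(number of generators)`. -/
lemma padic_span_finite {M : Type*} [AddCommGroup M] [Module ℤ_[p] M]
    {ι : Type*} [Fintype ι] (g : ι → M) (k : ℕ)
    (hk : ∀ i, (p : ℤ_[p]) ^ k • g i = 0) :
    Finite (span ℤ_[p] (Set.range g)) ∧
      Nat.card (span ℤ_[p] (Set.range g)) ≤ (p ^ k) ^ Fintype.card ι := by
  classical
  have hp : p.Prime := Fact.out
  haveI : NeZero (p ^ k) := ⟨pow_ne_zero _ hp.ne_zero⟩
  set S := span ℤ_[p] (Set.range g) with hS
  have hgS : ∀ i, g i ∈ S := fun i => subset_span (Set.mem_range_self i)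
  have hkn : ∀ i, (p ^ k) • g i = 0 := by
    intro i
    have : ((p ^ k : ℕ) : ℤ_[p]) • g i = 0 := by push_cast; exact hk i
    rwa [Nat.cast_smul_eq_nsmul] at this
  have key : ∀ (c : ℤ_[p]) (i : ι),
      c • g i = (((c.appr k : ZMod (p ^ k))).val) • g i := by
    intro c i
    obtain ⟨t, ht⟩ := Ideal.mem_span_singleton'.mp (PadicInt.appr_spec k c)
    have hc : (c.appr k : ℤ_[p]) + t * (p : ℤ_[p]) ^ k = c := by rw [ht]; ring
    have h1 : c • g i = (c.appr k : ℤ_[p]) • g i + t • ((p : ℤ_[p]) ^ k • g i) := by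
      conv_lhs => rw [← hc]
      rw [add_smul, mul_smul]
    rw [hk i, smul_zero, add_zero] at h1
    rw [h1, Nat.cast_smul_eq_nsmul, ZMod.val_natCast]
    conv_lhs => rw [← Nat.div_add_mod (c.appr k) (p ^ k)]
    rw [add_nsmul, mul_nsmul, hkn i, smul_zero, zero_add]
  let ψ : (ι → ZMod (p ^ k)) → S := fun c =>
    ⟨∑ i, (c i).val • g i, sum_mem fun i _ => nsmul_mem (hgS i) _⟩
  have hψ : Function.Surjective ψ := by
    rintro ⟨x, hx⟩
    rw [hS, mem_span_range_iff_exists_fun] at hx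
    obtain ⟨c, hc⟩ := hx
    refine ⟨fun i => ((c i).appr k : ZMod (p ^ k)), Subtype.ext ?_⟩
    show ∑ i, _ • g i = x
    rw [← hc]
    exact Finset.sum_congr rfl fun i _ => (key (c i) i).symm
  refine ⟨Finite.of_surjective ψ hψ, ?_⟩
  calc Nat.card S ≤ Nat.card (ι → ZMod (p ^ k)) := Nat.card_le_card_of_surjective ψ hψ
    _ = (p ^ k) ^ Fintype.card ι := by
        rw [Nat.card_pi]
        simp [Nat.card_zmod, Finset.prod_const, Finset.card_univ]

end AuxLemmas

/-- Proposition: let `G` be a finite group and `A` an abelian pro-`p` group which is a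
finitely generated `ℤ_pG`-module; let `dim A` be the torsion-free rank of `A` as a
`ℤ_p`-module (the rank of `A` modulo its torsion submodule). Then
`t(A/(G−1)A) ≤ t(A) * |G| ^ (dim A)`. -/
theorem torsion_coinvariants_le (hG : Finite G)
    [Module.Finite (MonoidAlgebra ℤ_[p] G) A] :
    (addTorsionSet (A ⧸ augmentationSubmodule p G A)).Finite ∧
    Nat.card (addTorsionSet (A ⧸ augmentationSubmodule p G A)) ≤
      Nat.card (addTorsionSet A) *
        Nat.card G ^ (Module.finrank ℤ_[p] (A ⧸ Submodule.torsion ℤ_[p] A)) := by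
  classical
  haveI : Fintype G := Fintype.ofFinite G
  have hp : p.Prime := Fact.out
  haveI : Module.Finite ℤ_[p] (MonoidAlgebra ℤ_[p] G) := MonoidAlgebra.moduleFinite
  haveI : Module.Finite ℤ_[p] A := Module.Finite.trans (MonoidAlgebra ℤ_[p] G) A
  set B := augmentationSubmodule p G A with hB
  set T := Submodule.torsion ℤ_[p] A with hT
  set m := Nat.card G with hm
  have hm0 : m ≠ 0 := Nat.card_pos.ne'
  set v := m.factorization p with hv
  have hNle : p ^ v ≤ m := Nat.le_of_dvd (Nat.pos_of_ne_zero hm0) (Nat.ordProj_dvd m p)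
  -- the prime-to-p part of m is a unit in ℤ_[p]
  have hunit : IsUnit ((m / p ^ v : ℕ) : ℤ_[p]) := by
    rw [PadicInt.isUnit_iff]
    refine le_antisymm (PadicInt.norm_le_one _) (not_lt.mp ?_)
    have hcast : ((m / p ^ v : ℕ) : ℤ_[p]) = (((m / p ^ v : ℕ) : ℤ) : ℤ_[p]) := by norm_cast
    rw [hcast, PadicInt.norm_int_lt_one_iff_dvd]
    exact_mod_cast Nat.not_dvd_ordCompl hp hm0
  obtain ⟨w, hw⟩ := hunit
  have hpv : ((p ^ v : ℕ) : ℤ_[p]) = (p : ℤ_[p]) ^ v := by push_cast; rfl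
  have hmw : (m : ℤ_[p]) = (p : ℤ_[p]) ^ v * (w : ℤ_[p]) := by
    calc (m : ℤ_[p]) = ((p ^ v * (m / p ^ v) : ℕ) : ℤ_[p]) := by
          rw [Nat.ordProj_mul_ordCompl_eq_self m p]
      _ = ((p ^ v : ℕ) : ℤ_[p]) * ((m / p ^ v : ℕ) : ℤ_[p]) := by push_cast; ring
      _ = (p : ℤ_[p]) ^ v * (w : ℤ_[p]) := by rw [hpv, hw]
  -- the norm (averaging) operator
  let gsm : G → (A →ₗ[ℤ_[p]] A) := fun g =>
    { toFun := fun a => MonoidAlgebra.of ℤ_[p] G g • a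
      map_add' := fun a b => smul_add _ a b
      map_smul' := fun c a => by
        simp only [RingHom.id_apply]
        rw [← algebraMap_smul (MonoidAlgebra ℤ_[p] G) c a, ← mul_smul, ← Algebra.commutes,
          mul_smul, algebraMap_smul] }
  let ν : A →ₗ[ℤ_[p]] A := ∑ g : G, gsm g
  have hν : ∀ a : A, ν a = ∑ g : G, MonoidAlgebra.of ℤ_[p] G g • a := fun a => by
    simp [ν, gsm]
  have hν_of : ∀ (g : G) (a : A), ν (MonoidAlgebra.of ℤ_[p] G g • a) = ν a := by
    intro g a
    rw [hν, hν]
    refine Fintype.sum_equiv (Equiv.mulRight g) _ _ fun x => ?_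
    rw [smul_smul, ← map_mul]
    rfl
  have hνB : ∀ x ∈ B, ν x = 0 := by
    intro x hx
    have hle : B ≤ LinearMap.ker ν := by
      rw [hB, augmentationSubmodule, Submodule.span_le]
      rintro y ⟨g, a, rfl⟩
      simp only [SetLike.mem_coe, LinearMap.mem_ker, map_sub, hν_of, sub_self]
    exact hle hx
  have hνT : ∀ x ∈ T, ν x ∈ T := by
    intro x hx
    rw [hT, Submodule.mem_torsion_iff] at hx ⊢
    obtain ⟨c, hc⟩ := hx
    refine ⟨c, ?_⟩
    rw [Submonoid.smul_def] at hc ⊢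
    rw [← ν.map_smul, hc, map_zero]
  have hνm : ∀ a : A, ν a - (m : ℤ_[p]) • a ∈ B := by
    intro a
    have hsum : ν a - (m : ℤ_[p]) • a = ∑ g : G, (MonoidAlgebra.of ℤ_[p] G g • a - a) := by
      rw [Finset.sum_sub_distrib, ← hν, Finset.sum_const, Finset.card_univ]
      congr 1
      rw [hm, Nat.card_eq_fintype_card, Nat.cast_smul_eq_nsmul]
    rw [hsum, hB, augmentationSubmodule]
    exact Submodule.sum_mem _ fun g _ => Submodule.subset_span ⟨g, a, rfl⟩
  -- quotients
  set BT := B ⊔ T with hBT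
  let h : (A ⧸ B) →ₗ[ℤ_[p]] A ⧸ BT :=
    Submodule.liftQ B BT.mkQ (by rw [Submodule.ker_mkQ]; exact le_sup_left)
  let f : (A ⧸ T) →ₗ[ℤ_[p]] A ⧸ BT :=
    Submodule.liftQ T BT.mkQ (by rw [Submodule.ker_mkQ]; exact le_sup_right)
  let C : Submodule ℤ_[p] A :=
    Submodule.comap ((m : ℤ_[p]) • (LinearMap.id : A →ₗ[ℤ_[p]] A)) BT
  have hmemC : ∀ a : A, a ∈ C ↔ (m : ℤ_[p]) • a ∈ BT := fun a => Iff.rfl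
  let S₂ : Submodule ℤ_[p] (A ⧸ BT) := Submodule.map BT.mkQ C
  have hS₂kill : ∀ x ∈ S₂, (m : ℤ_[p]) • x = 0 := by
    rintro x ⟨a, ha, rfl⟩
    rw [← map_smul]
    exact (Submodule.Quotient.mk_eq_zero _).mpr ha
  have hS₂killN : ∀ x ∈ S₂, (p : ℤ_[p]) ^ v • x = 0 := by
    intro x hx
    have h1 : (p : ℤ_[p]) ^ v = (m : ℤ_[p]) * ((w⁻¹ : ℤ_[p]ˣ) : ℤ_[p]) := by
      rw [hmw, mul_assoc, Units.mul_inv, mul_one]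
    rw [h1, mul_comm, mul_smul, hS₂kill x hx, smul_zero]
  let C' : Submodule ℤ_[p] (A ⧸ T) := Submodule.map T.mkQ C
  have hS₂eq : S₂ = Submodule.map f C' := by
    show Submodule.map BT.mkQ C = _
    rw [← Submodule.map_comp, Submodule.liftQ_mkQ]
  -- C' is finite free
  haveI : Module.Finite ℤ_[p] (A ⧸ T) :=
    Module.Finite.of_surjective T.mkQ (Submodule.mkQ_surjective T)
  haveI : Module.Finite ℤ_[p] C' := Module.Finite.iff_fg.mpr (IsNoetherian.noetherian C')
  haveI : Module.Free ℤ_[p] C' := Module.free_of_finite_type_torsion_free'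
  let ι := Module.Free.ChooseBasisIndex ℤ_[p] C'
  let b : Module.Basis ι ℤ_[p] C' := Module.Free.chooseBasis ℤ_[p] C'
  let gg : ι → A ⧸ BT := fun i => f ((b i : A ⧸ T))
  have hC'span : C' = Submodule.span ℤ_[p] (Set.range (fun i => ((b i : A ⧸ T)))) := by
    conv_lhs => rw [← Submodule.map_subtype_top C']
    rw [← b.span_eq, Submodule.map_span]
    congr 1
    exact (Set.range_comp _ _).symm
  have hspan : S₂ = Submodule.span ℤ_[p] (Set.range gg) := by
    rw [hS₂eq, hC'span, Submodule.map_span]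
    congr 1
    exact (Set.range_comp _ _).symm
  have hggmem : ∀ i, gg i ∈ S₂ := by
    intro i
    rw [hS₂eq]
    exact Submodule.mem_map_of_mem (b i).2
  have hgkill : ∀ i, (p : ℤ_[p]) ^ v • gg i = 0 := fun i => hS₂killN _ (hggmem i)
  obtain ⟨hS₂fin, hS₂card⟩ := padic_span_finite gg v hgkill
  rw [← hspan] at hS₂fin hS₂card
  have hsr : Fintype.card ι ≤ Module.finrank ℤ_[p] (A ⧸ T) := by
    rw [← Module.finrank_eq_card_chooseBasisIndex]
    exact Submodule.finrank_le C'
  -- torsion of A ⧸ BT is contained in S₂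
  have hYsub : addTorsionSet (A ⧸ BT) ⊆ (S₂ : Set (A ⧸ BT)) := by
    rintro x ⟨n, hn, hnx⟩
    obtain ⟨a, rfl⟩ := BT.mkQ_surjective x
    have hna : (n : ℤ_[p]) • a ∈ BT := by
      rwa [← Submodule.Quotient.mk_eq_zero BT, ← Submodule.mkQ_apply, map_smul,
        Nat.cast_smul_eq_nsmul]
    obtain ⟨bb, hbb, t, ht, hsum⟩ := Submodule.mem_sup.mp hna
    have h1 : (n : ℤ_[p]) • ν a = ν bb + ν t := by
      rw [← map_smul, ← hsum, map_add]
    rw [hνB bb hbb, zero_add] at h1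
    have hνaT : ν a ∈ T := by
      have h2 : (n : ℤ_[p]) • ν a ∈ T := h1 ▸ hνT t ht
      rw [hT, Submodule.mem_torsion_iff] at h2 ⊢
      obtain ⟨c, hc⟩ := h2
      refine ⟨⟨(c : ℤ_[p]) * (n : ℤ_[p]),
        mul_mem c.2 (mem_nonZeroDivisors_of_ne_zero (by exact_mod_cast hn.ne'))⟩, ?_⟩
      rw [Submonoid.smul_def] at hc ⊢
      rw [mul_smul]
      exact hc
    have hma : (m : ℤ_[p]) • a ∈ BT := by
      have heq : (m : ℤ_[p]) • a = ν a - (ν a - (m : ℤ_[p]) • a) := by abel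
      rw [heq]
      exact Submodule.sub_mem _ (Submodule.mem_sup_right hνaT)
        (Submodule.mem_sup_left (hνm a))
    exact ⟨a, hma, rfl⟩
  -- T is finite
  obtain ⟨nT, gT, hgT⟩ := Submodule.fg_iff_exists_fin_generating_family.mp
    (IsNoetherian.noetherian T)
  have hgTmem : ∀ i, gT i ∈ T := by
    intro i
    rw [← hgT]
    exact Submodule.subset_span (Set.mem_range_self i)
  have hgTtors : ∀ i, gT i ∈ Submodule.torsion ℤ_[p] A := fun i => hT ▸ hgTmem i
  choose kT hkT using fun i => padic_torsion_killed (hgTtors i)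
  have hgTkill : ∀ i, (p : ℤ_[p]) ^ (Finset.univ.sup kT) • gT i = 0 := by
    intro i
    have hle : kT i ≤ Finset.univ.sup kT := Finset.le_sup (Finset.mem_univ i)
    rw [← Nat.sub_add_cancel hle, pow_add, mul_smul, hkT i, smul_zero]
  have hTfin : Finite T := by
    have := (padic_span_finite gT (Finset.univ.sup kT) hgTkill).1
    rwa [hgT] at this
  -- K := image of T in A ⧸ B
  let K : Submodule ℤ_[p] (A ⧸ B) := Submodule.map B.mkQ T
  have hKsurj : Function.Surjective
      (fun t : T => (⟨B.mkQ t, Submodule.mem_map_of_mem t.2⟩ : K)) := by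
    rintro ⟨x, hx⟩
    obtain ⟨t, ht, rfl⟩ := hx
    exact ⟨⟨t, ht⟩, rfl⟩
  haveI hKfin : Finite K := Finite.of_surjective _ hKsurj
  have hKcard : Nat.card K ≤ Nat.card T := Nat.card_le_card_of_surjective _ hKsurj
  -- torsion of A ⧸ BT : finiteness and cardinality
  haveI : Finite S₂ := hS₂fin
  have hS₂setfin : (S₂ : Set (A ⧸ BT)).Finite := Set.toFinite _
  have hYfin : (addTorsionSet (A ⧸ BT)).Finite := hS₂setfin.subset hYsub
  have hYcard : Nat.card (addTorsionSet (A ⧸ BT)) ≤ Nat.card S₂ :=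
    Nat.card_mono hS₂setfin hYsub
  -- torsion of A ⧸ B injects into K × torsion of A ⧸ BT
  have hhX : ∀ x ∈ addTorsionSet (A ⧸ B), h x ∈ addTorsionSet (A ⧸ BT) := by
    rintro x ⟨n, hn, hnx⟩
    exact ⟨n, hn, by rw [← map_nsmul, hnx, map_zero]⟩
  have hker : ∀ x : A ⧸ B, h x = 0 → x ∈ K := by
    intro x hx
    obtain ⟨a, rfl⟩ := B.mkQ_surjective x
    have haBT : a ∈ BT := by
      rw [← Submodule.Quotient.mk_eq_zero BT, ← Submodule.mkQ_apply]
      exact hx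
    obtain ⟨bb, hbb, t, ht, hsum⟩ := Submodule.mem_sup.mp haBT
    have hb0 : B.mkQ bb = 0 := (Submodule.Quotient.mk_eq_zero B).mpr hbb
    have hat : B.mkQ a = B.mkQ t := by rw [← hsum, map_add, hb0, zero_add]
    rw [hat]
    exact Submodule.mem_map_of_mem ht
  set X := addTorsionSet (A ⧸ B) with hX
  let σ : (A ⧸ BT) → (A ⧸ B) := fun y => if hy : ∃ x : X, h ↑x = y then ↑hy.choose else 0
  let e : X → K × (addTorsionSet (A ⧸ BT)) := fun x =>
    (⟨(↑x : A ⧸ B) - σ (h ↑x), by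
        have hy : ∃ x' : X, h ↑x' = h ↑x := ⟨x, rfl⟩
        apply hker
        rw [map_sub]
        simp only [σ, dif_pos hy]
        rw [hy.choose_spec, sub_self]⟩,
     ⟨h ↑x, hhX ↑x x.2⟩)
  have einj : Function.Injective e := by
    intro x x' hxx
    have h1 : h ↑x = h ↑x' := congrArg (fun z => (z.2 : A ⧸ BT)) hxx
    have h2 : (↑x : A ⧸ B) - σ (h ↑x) = (↑x' : A ⧸ B) - σ (h ↑x') :=
      congrArg (fun z => (z.1 : A ⧸ B)) hxx
    rw [h1] at h2
    exact Subtype.ext (by rwa [sub_left_inj] at h2)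
  haveI : Finite (addTorsionSet (A ⧸ BT)) := hYfin.to_subtype
  have hXfin : (addTorsionSet (A ⧸ B)).Finite :=
    Set.finite_coe_iff.mp (Finite.of_injective e einj)
  have hXcard : Nat.card X ≤ Nat.card K * Nat.card (addTorsionSet (A ⧸ BT)) := by
    have hc := Nat.card_le_card_of_injective e einj
    rwa [Nat.card_prod] at hc
  refine ⟨hXfin, ?_⟩
  have hTA : Nat.card (addTorsionSet A) = Nat.card T := by
    rw [addTorsionSet_eq_torsion (p := p) A]
    rfl
  calc Nat.card X ≤ Nat.card K * Nat.card (addTorsionSet (A ⧸ BT)) := hXcard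
    _ ≤ Nat.card T * Nat.card S₂ := Nat.mul_le_mul hKcard hYcard
    _ ≤ Nat.card T * (p ^ v) ^ Fintype.card ι := Nat.mul_le_mul_left _ hS₂card
    _ ≤ Nat.card T * m ^ (Module.finrank ℤ_[p] (A ⧸ T)) := by
        apply Nat.mul_le_mul_left
        calc (p ^ v) ^ Fintype.card ι ≤ m ^ Fintype.card ι := Nat.pow_le_pow_left hNle _
          _ ≤ m ^ (Module.finrank ℤ_[p] (A ⧸ T)) :=
            Nat.pow_le_pow_right (Nat.one_le_iff_ne_zero.mpr hm0) hsr
    _ = Nat.card (addTorsionSet A) * m ^ (Module.finrank ℤ_[p] (A ⧸ T)) := by rw [hTA]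
end

section
/- Let p be a prime, let G be a p-large group, and let H be a normal subgroup of G of index a power of p. Then G has a normal subgroup S of index a power of p in G such that S is properly contained in H and the abelianization S/[S,S] is infinite. -/
/-- A group `G` is `p`-large if it has a normal subgroup of index a power of `p` that has a
nonabelian free group as a homomorphic image. -/
def PLarge (p : ℕ) (G : Type*) [Group G] : Prop :=
  ∃ N : Subgroup G, N.Normal ∧ (∃ k : ℕ, N.index = p ^ k) ∧
    ∃ (ι : Type) (_ : Nontrivial ι) (φ : ↥N →* FreeGroup ι), Function.Surjective φ

/-- A nontrivial free group surjects onto `ℤ`. -/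
lemma free_group_surj_int (F : Type*) [Group F] [IsFreeGroup F] [Nontrivial F] :
    ∃ ψ : F →* Multiplicative ℤ, Function.Surjective ψ := by
  have hne : Nonempty (IsFreeGroup.Generators F) := by
    by_contra h
    rw [not_nonempty_iff] at h
    have hsub : Subsingleton (FreeGroup (IsFreeGroup.Generators F)) := by
      constructor
      intro a b
      have ha : ∀ x : FreeGroup (IsFreeGroup.Generators F), x = 1 := by
        intro x
        rw [← FreeGroup.toWord_eq_nil_iff]
        cases hx : x.toWord with
        | nil => rfl
        | cons hd tl => exact (h.false hd.1).elim
      rw [ha a, ha b]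
    have : Subsingleton F := (IsFreeGroup.toFreeGroup (G := F)).toEquiv.subsingleton
    exact false_of_nontrivial_of_subsingleton F
  obtain ⟨a⟩ := hne
  refine ⟨IsFreeGroup.lift (fun _ => Multiplicative.ofAdd (1 : ℤ)), fun x => ?_⟩
  refine ⟨IsFreeGroup.of a ^ (Multiplicative.toAdd x), ?_⟩
  rw [map_zpow, IsFreeGroup.lift_of, ← ofAdd_zsmul]
  simp

/-- A finite-index subgroup of a group that surjects onto a nonabelian free group
surjects onto `ℤ`. -/
lemma exists_surj_int {G : Type*} [Group G] {ι : Type} [Nontrivial ι]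
    {N T : Subgroup G} (hTN : T ≤ N) (φ : ↥N →* FreeGroup ι) (hφ : Function.Surjective φ)
    (hT : T.index ≠ 0) : ∃ ψ : ↥T →* Multiplicative ℤ, Function.Surjective ψ := by
  set f : ↥T →* FreeGroup ι := φ.comp (Subgroup.inclusion hTN) with hfdef
  have hrange : f.range = (T.subgroupOf N).map φ := by
    rw [hfdef, MonoidHom.range_comp, Subgroup.inclusion_range]
  have h1 : (T.subgroupOf N).index ≠ 0 := by
    intro h0
    apply hT
    rw [← Subgroup.relIndex_mul_index hTN]
    have : T.relIndex N = (T.subgroupOf N).index := rfl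
    rw [this, h0, zero_mul]
  have h2 : f.range.index ≠ 0 := by
    intro h0
    apply h1
    have hd : ((T.subgroupOf N).map φ).index ∣ (T.subgroupOf N).index :=
      Subgroup.index_map_dvd _ hφ
    rw [← hrange, h0] at hd
    exact Nat.eq_zero_of_zero_dvd hd
  haveI : Infinite (FreeGroup ι) := by
    haveI : Nonempty ι := Nontrivial.to_nonempty
    infer_instance
  haveI hinf : Infinite ↥f.range := by
    by_contra h
    rw [not_infinite_iff_finite] at h
    have hc := Subgroup.card_mul_index f.range
    have hc' : Nat.card ↥f.range * f.range.index ≠ 0 :=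
      Nat.mul_ne_zero (Nat.card_ne_zero.mpr ⟨inferInstance, h⟩) h2
    rw [hc] at hc'
    exact hc' Nat.card_eq_zero_of_infinite
  haveI : Nontrivial ↥f.range := Infinite.instNontrivial _
  haveI : IsFreeGroup ↥f.range := inferInstance
  obtain ⟨ψ0, hψ0⟩ := free_group_surj_int ↥f.range
  exact ⟨ψ0.comp f.rangeRestrict, hψ0.comp f.rangeRestrict_surjective⟩

/-- If `G` is a `p`-large group and `H` is a normal subgroup of `G` of index a power of
`p`, then `G` has a normal subgroup `S` of index a power of `p`, properly contained in `H`,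
whose abelianization is infinite. -/
theorem exists_normal_lt_infinite_abelianization (p : ℕ) (hp : p.Prime)
    (G : Type*) [Group G] (hG : PLarge p G)
    (H : Subgroup G) (hH : H.Normal) (hHidx : ∃ k : ℕ, H.index = p ^ k) :
    ∃ S : Subgroup G, S.Normal ∧ (∃ k : ℕ, S.index = p ^ k) ∧ S < H ∧
      Infinite (Abelianization ↥S) := by
  haveI := Fact.mk hp
  haveI : NeZero p := ⟨hp.ne_zero⟩
  obtain ⟨N, hN, ⟨k, hk⟩, ι, hι, φ, hφ⟩ := hG
  obtain ⟨m, hm⟩ := hHidx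
  haveI := hι
  -- The subgroup `M = N ⊓ H`, normal of `p`-power index.
  set M : Subgroup G := N ⊓ H with hMdef
  haveI hMnormal : M.Normal := by
    constructor
    intro n hn g
    exact ⟨hN.conj_mem _ hn.1 g, hH.conj_mem _ hn.2 g⟩
  have hMN : M ≤ N := inf_le_left
  have hMH : M ≤ H := inf_le_right
  have hMidx_dvd : M.index ∣ p ^ (k + m) := by
    have h1 : N.relIndex H * H.index = M.index := Subgroup.relIndex_mul_index hMH ▸ by
      rw [← Subgroup.inf_relIndex_right N H]
    rw [← h1, pow_add, ← hk, ← hm]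
    exact mul_dvd_mul (Subgroup.relIndex_dvd_index_of_normal N H) dvd_rfl
  obtain ⟨jM, _, hjM⟩ := (Nat.dvd_prime_pow hp).mp hMidx_dvd
  have hMne : M.index ≠ 0 := by rw [hjM]; exact pow_ne_zero _ hp.pos.ne'
  -- A surjective character `χ : M →* ZMod p`.
  obtain ⟨ψM, hψM⟩ := exists_surj_int hMN φ hφ hMne
  set ρ : Multiplicative ℤ →* Multiplicative (ZMod p) :=
    AddMonoidHom.toMultiplicative (Int.castAddHom (ZMod p)) with hρdef
  have hρ : Function.Surjective ρ := by
    intro x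
    obtain ⟨n, hn⟩ := ZMod.intCast_surjective (Multiplicative.toAdd x)
    refine ⟨Multiplicative.ofAdd n, ?_⟩
    have : Multiplicative.ofAdd ((n : ℤ) : ZMod p) = x := by
      rw [hn]; simp
    simpa [hρdef] using this
  set χ : ↥M →* Multiplicative (ZMod p) := ρ.comp ψM with hχdef
  have hχ : Function.Surjective χ := hρ.comp hψM
  -- Conjugated characters.
  set κ : G → (↥M →* Multiplicative (ZMod p)) :=
    fun h => χ.comp (MulAut.conjNormal h).toMonoidHom with hκdef
  have key : ∀ (h : G) (n x : ↥M), κ (h * ↑n) x = κ h x := by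
    intro h n x
    have e1 : MulAut.conjNormal (G := G) (H := M) (h * ↑n)
        = MulAut.conjNormal h * MulAut.conjNormal (↑n : G) := map_mul _ _ _
    have e2 : (MulAut.conjNormal (↑n : G)) x = n * x * n⁻¹ := by
      ext; simp
    show χ ((MulAut.conjNormal (h * ↑n)) x) = χ ((MulAut.conjNormal h) x)
    rw [e1]
    show χ ((MulAut.conjNormal h) ((MulAut.conjNormal (↑n : G)) x)) = _
    rw [e2]
    show (χ.comp (MulAut.conjNormal h).toMonoidHom) (n * x * n⁻¹)
        = (χ.comp (MulAut.conjNormal h).toMonoidHom) x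
    rw [map_mul, map_mul, map_inv]
    exact mul_inv_cancel_comm _ _
  -- The subgroup `S`.
  set S' : Subgroup ↥M := ⨅ h : G, (κ h).ker with hS'def
  set S : Subgroup G := S'.map M.subtype with hSdef
  have hSM : S ≤ M := Subgroup.map_subtype_le S'
  have hS_mem : ∀ x : ↥M, ((↑x : G) ∈ S ↔ ∀ h : G, κ h x = 1) := by
    intro x
    constructor
    · rintro hx h
      obtain ⟨y, hy, hyx⟩ := Subgroup.mem_map.mp hx
      have hyx' : y = x := Subtype.ext hyx
      subst hyx'
      exact Subgroup.mem_iInf.mp hy h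
    · intro hx
      exact Subgroup.mem_map.mpr ⟨x, Subgroup.mem_iInf.mpr fun h => hx h, rfl⟩
  have hSnormal : S.Normal := by
    constructor
    intro s hs g
    obtain ⟨x, hx, rfl⟩ := Subgroup.mem_map.mp hs
    have hgM : g * (↑x : G) * g⁻¹ ∈ M := hMnormal.conj_mem _ x.2 g
    have hcoe : g * (M.subtype x : G) * g⁻¹ = ((⟨g * ↑x * g⁻¹, hgM⟩ : ↥M) : G) := rfl
    rw [hcoe, hS_mem]
    intro h
    have hxc : (⟨g * ↑x * g⁻¹, hgM⟩ : ↥M) = MulAut.conjNormal g x := by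
      ext; simp
    rw [hxc]
    have : κ h (MulAut.conjNormal g x) = κ (h * g) x := by
      show χ ((MulAut.conjNormal h) (MulAut.conjNormal g x))
          = χ ((MulAut.conjNormal (h * g)) x)
      rw [map_mul]
      rfl
    rw [this]
    exact Subgroup.mem_iInf.mp hx (h * g)
  -- `S` is properly contained in `H`.
  have hSH : S ≤ H := hSM.trans hMH
  obtain ⟨w, hw⟩ := hχ (Multiplicative.ofAdd (1 : ZMod p))
  have hχw : χ w ≠ 1 := by
    rw [hw]
    intro hcon
    have : (1 : ZMod p) = 0 := by
      have := congrArg Multiplicative.toAdd hcon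
      simpa using this
    exact one_ne_zero this
  have hwS : (↑w : G) ∉ S := by
    intro hws
    apply hχw
    have h1 := (hS_mem w).mp hws 1
    have : κ 1 w = χ w := by
      show χ ((MulAut.conjNormal (1 : G)) w) = χ w
      rw [map_one]
      rfl
    rwa [this] at h1
  have hSlt : S < H := lt_of_le_of_ne hSH (by
    intro hEq
    exact hwS (hEq ▸ hMH w.2))
  -- `S` has `p`-power index.
  haveI hfinQ : Finite (G ⧸ M) := by
    apply Nat.finite_of_card_ne_zero
    have : Nat.card (G ⧸ M) = M.index := rfl
    rw [this]
    exact hMne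
  set Ψ : ↥M →* ((G ⧸ M) → Multiplicative (ZMod p)) :=
    Pi.monoidHom (fun c => κ (Quotient.out c)) with hΨdef
  have hS'ker : S' = Ψ.ker := by
    apply le_antisymm
    · intro x hx
      rw [MonoidHom.mem_ker]
      funext c
      exact Subgroup.mem_iInf.mp hx (Quotient.out c)
    · intro x hx
      rw [Subgroup.mem_iInf]
      intro h
      rw [MonoidHom.mem_ker] at hx ⊢
      set c : G ⧸ M := QuotientGroup.mk h with hcdef
      have hmk : QuotientGroup.mk (s := M) (Quotient.out c) = QuotientGroup.mk h :=
        Quotient.out_eq c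
      have hnM : h⁻¹ * Quotient.out c ∈ M := (QuotientGroup.eq).mp hmk.symm
      have hout : Quotient.out c = h * ↑(⟨h⁻¹ * Quotient.out c, hnM⟩ : ↥M) := by
        simp
      have h1 : κ (Quotient.out c) x = 1 := by
        have := congrFun hx c
        exact this
      rw [hout, key] at h1
      exact h1
  have hS'idx : S'.index ∣ p ^ (Nat.card (G ⧸ M)) := by
    rw [hS'ker, Subgroup.index_ker]
    have hdvd := Subgroup.card_subgroup_dvd_card Ψ.range
    have hcard : Nat.card ((G ⧸ M) → Multiplicative (ZMod p)) = p ^ (Nat.card (G ⧸ M)) := by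
      rw [Nat.card_fun]
      congr 1
      have : Nat.card (Multiplicative (ZMod p)) = Nat.card (ZMod p) := rfl
      rw [this, Nat.card_eq_fintype_card, ZMod.card]
    rwa [hcard] at hdvd
  obtain ⟨j1, _, hj1⟩ := (Nat.dvd_prime_pow hp).mp hS'idx
  have hrel : S.relIndex M = S'.index := by
    have : S.subgroupOf M = S' :=
      Subgroup.comap_map_eq_self_of_injective M.subtype_injective S'
    show (S.subgroupOf M).index = S'.index
    rw [this]
  have hSidx : S.index = p ^ (j1 + jM) := by
    rw [← Subgroup.relIndex_mul_index hSM, hrel, hj1, hjM, pow_add]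
  -- `S` has infinite abelianization.
  have hSN : S ≤ N := hSM.trans hMN
  have hSne : S.index ≠ 0 := by rw [hSidx]; exact pow_ne_zero _ hp.pos.ne'
  obtain ⟨ψS, hψS⟩ := exists_surj_int hSN φ hφ hSne
  have habel : Infinite (Abelianization ↥S) := by
    have hsurj : Function.Surjective (Abelianization.lift ψS) := by
      intro x
      obtain ⟨s, hs⟩ := hψS x
      exact ⟨Abelianization.of s, by simpa using hs⟩
    exact Infinite.of_surjective _ hsurj
  exact ⟨S, hSnormal, ⟨j1 + jM, hSidx⟩, hSlt, habel⟩
end
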